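/- arXiv:1207.1673 — 2 statements merged into one kernel-verified Lean document; each statement's English description precedes it below -/
import Mathlib

section
/- Let O be a complete discrete valuation ring, and consider the two-variable power series ring O[[T₁, T₂]], viewed as R₂[[T₁]] with R₂ = O[[T₂]]. Suppose g(T₁, T₂) ∈ R₂[[T₁]] has Weierstrass decomposition g = u₂(T₁)·f₂(T₁)·ϖ₂(T₂) with f₂ a distinguished polynomial of degree r in R₂[T₁], u₂ a unit, and ϖ₂ ∈ R₂. If ζ is a p-power root of unity (in a sufficiently large O) with ϖ₂(ζ − 1) ≠ 0, then the one-variable power series g(T₁, ζ − 1) ∈ O'[[T₁]] (O' the ring of integers of the extension generated by ζ) has Weierstrass degree exactly r. -/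
open PowerSeries

/-- A distinguished (Weierstrass) polynomial over a local ring: monic, with all
non-leading coefficients in the maximal ideal. -/
def Polynomial.IsDistinguished {R : Type*} [CommRing R] [IsLocalRing R]
    (f : Polynomial R) : Prop :=
  f.Monic ∧ ∀ i < f.natDegree, f.coeff i ∈ IsLocalRing.maximalIdeal R

/-- `g ∈ O⟦X⟧` has Weierstrass degree `r`: it factors as `u·f·ϖ^μ` with `u` a unit,
`ϖ` a uniformizer, and `f` a distinguished polynomial of degree `r`. -/
def PowerSeries.HasWeierstrassDegree {O : Type*} [CommRing O] [IsLocalRing O]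
    (g : PowerSeries O) (r : ℕ) : Prop :=
  ∃ (u : PowerSeries O) (f : Polynomial O) (ϖ : O) (μ : ℕ),
    IsUnit u ∧ Irreducible ϖ ∧ f.IsDistinguished ∧ f.natDegree = r ∧
      g = u * (f : PowerSeries O) * (C ϖ) ^ μ

/-- let `g = u₂(T₁)·f₂(T₁)·ϖ₂(T₂)` in `R₂⟦T₁⟧` with `R₂ = O⟦T₂⟧`, `f₂`
distinguished of degree `r`, `u₂` a unit, `ϖ₂ ∈ R₂`.  If `ζ` is a primitive `p^k`-th
root of unity (in a sufficiently large `O`) with `ϖ₂(ζ−1) ≠ 0`, then the specialized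
one-variable power series `g(T₁, ζ−1)` has Weierstrass degree exactly `r`.  Here the
specialization `T₂ = ζ − 1` is the local `O`-algebra map `φ : O⟦T₂⟧ →+* O` with
`φ(T₂) = ζ − 1`. -/
theorem weierstrass_degree_of_specialization
    (p : ℕ) [Fact p.Prime]
    (O : Type*) [CommRing O] [IsDomain O] [IsDiscreteValuationRing O]
    [IsAdicComplete (IsLocalRing.maximalIdeal O) O]
    (hp : (p : O) ∈ IsLocalRing.maximalIdeal O)
    (g u₂ : PowerSeries (PowerSeries O)) (f₂ : Polynomial (PowerSeries O))
    (ϖ₂ : PowerSeries O) (r : ℕ)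
    (hu : IsUnit u₂) (hf : f₂.IsDistinguished) (hfr : f₂.natDegree = r)
    (hdec : g = u₂ * (f₂ : PowerSeries (PowerSeries O)) * PowerSeries.C ϖ₂)
    (ζ : O) (k : ℕ) (hk : 1 ≤ k) (hζ : IsPrimitiveRoot ζ (p ^ k))
    (φ : PowerSeries O →+* O) (hφloc : IsLocalHom φ)
    (hφC : ∀ a : O, φ (C a) = a) (hφX : φ PowerSeries.X = ζ - 1)
    (hϖζ : φ ϖ₂ ≠ 0) :
    (PowerSeries.map φ g).HasWeierstrassDegree r := by
  obtain ⟨ϖ, hirr⟩ := IsDiscreteValuationRing.exists_irreducible O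
  obtain ⟨μ, w, hw⟩ := IsDiscreteValuationRing.eq_unit_mul_pow_irreducible hϖζ hirr
  have hcoe : (PowerSeries.map φ) (f₂ : PowerSeries (PowerSeries O))
      = ((f₂.map (φ : PowerSeries O →+* O) : Polynomial O) : PowerSeries O) := by
    ext n
    simp [PowerSeries.coeff_map, Polynomial.coeff_coe, Polynomial.coeff_map]
  refine ⟨PowerSeries.map φ u₂ * C (w : O), f₂.map φ, ϖ, μ,
    (hu.map (PowerSeries.map φ)).mul (w.isUnit.map (C : O →+* PowerSeries O)), ?_, ?_, ?_, ?_⟩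
  · exact hirr
  · constructor
    · exact hf.1.map φ
    · intro i hi
      rw [hf.1.natDegree_map] at hi
      rw [Polynomial.coeff_map]
      have hmem : f₂.coeff i ∈ IsLocalRing.maximalIdeal (PowerSeries O) := hf.2 i hi
      rw [IsLocalRing.mem_maximalIdeal] at hmem ⊢
      exact fun h => hmem (isUnit_of_map_unit φ _ h)
  · rw [hf.1.natDegree_map, hfr]
  · rw [hdec]
    rw [map_mul, map_mul, PowerSeries.map_C, hcoe, hw]
    push_cast
    ring_nf
    rw [map_mul, map_pow]
    ring
end

section
/- Let O be a complete discrete valuation ring, g ∈ O[[T]] nonzero with Weierstrass degree d and Weierstrass factorization g = u·f·ϖ^μ. For m ≥ 1, define g_m(T) := g((1+T)^m − 1) ∈ O[[T]] (composition with the power map induced by the norm on a ℤ_p-quotient of index m, m a power of p). Then g_m has Weierstrass degree m·d. -/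
open PowerSeries

/-- The substitution `g(T) ↦ g((1+T)^m − 1)`, defined coefficientwise (the `k`-th term
`a_k·((1+T)^m − 1)^k` contributes to the coefficient of `T^j` only for `k ≤ j`). -/
noncomputable def PowerSeries.substPow {O : Type*} [CommRing O]
    (m : ℕ) (g : PowerSeries O) : PowerSeries O :=
  PowerSeries.mk fun j =>
    ∑ k ∈ Finset.range (j + 1),
      coeff k g * coeff j (((1 + PowerSeries.X) ^ m - 1) ^ k)

section Aux

variable {O : Type*} [CommRing O] (m : ℕ)

/-- The polynomial `(1+X)^m - 1`. -/
noncomputable def QPow : Polynomial O := (1 + Polynomial.X) ^ m - 1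

lemma QPow_coe : ((QPow m : Polynomial O) : PowerSeries O)
    = (1 + PowerSeries.X) ^ m - 1 := by
  simp [QPow, Polynomial.coe_sub, Polynomial.coe_pow, Polynomial.coe_add,
    Polynomial.coe_one, Polynomial.coe_X]

lemma coeff_phi_pow {k j : ℕ} (h : j < k) :
    coeff j (((1 + PowerSeries.X : PowerSeries O) ^ m - 1) ^ k) = 0 := by
  have hX : (PowerSeries.X : PowerSeries O) ∣ (1 + PowerSeries.X) ^ m - 1 := by
    rw [PowerSeries.X_dvd_iff]
    simp
  have := pow_dvd_pow_of_dvd hX k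
  exact PowerSeries.X_pow_dvd_iff.1 this j h

lemma coeff_substPow (g : PowerSeries O) {j n : ℕ} (h : j < n) :
    coeff j (substPow m g)
      = ∑ i ∈ Finset.range n, coeff i g * coeff j (((1 + PowerSeries.X) ^ m - 1) ^ i) := by
  rw [substPow, coeff_mk]
  refine Finset.sum_subset (Finset.range_subset_range.2 h) ?_
  intro i hi hni
  simp only [Finset.mem_range, not_lt] at hni
  rw [coeff_phi_pow m (by omega), mul_zero]

lemma coeff_substPow_eval₂ (g : PowerSeries O) {j n : ℕ} (h : j < n) :
    coeff j (substPow m g)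
      = coeff j ((trunc n g).eval₂ C ((1 + PowerSeries.X) ^ m - 1)) := by
  obtain ⟨n, rfl⟩ : ∃ n', n = n' + 1 := ⟨n - 1, by omega⟩
  rw [coeff_substPow m g h,
    Polynomial.eval₂_eq_sum_range' C (natDegree_trunc_lt g n) _, map_sum]
  refine Finset.sum_congr rfl fun i hi => ?_
  rw [coeff_trunc, if_pos (Finset.mem_range.1 hi), coeff_C_mul]

lemma coeff_eval₂_eq_zero {D : Polynomial O} {j : ℕ}
    (hD : ∀ i ≤ j, D.coeff i = 0) :
    coeff j (D.eval₂ C ((1 + PowerSeries.X) ^ m - 1)) = 0 := by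
  rw [Polynomial.eval₂_eq_sum_range' C (Nat.lt_succ_self D.natDegree) _, map_sum]
  refine Finset.sum_eq_zero fun i _ => ?_
  rcases le_or_gt i j with hij | hij
  · rw [hD i hij, map_zero, zero_mul, map_zero]
  · rw [coeff_C_mul, coeff_phi_pow m hij, mul_zero]

lemma substPow_mul (a b : PowerSeries O) :
    substPow m (a * b) = substPow m a * substPow m b := by
  ext j
  set n := j + 1 with hn
  have hj : j < n := Nat.lt_succ_self j
  rw [coeff_substPow_eval₂ m (a * b) hj]
  have key : coeff j ((trunc n (a * b)).eval₂ C ((1 + PowerSeries.X) ^ m - 1))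
      = coeff j ((trunc n a * trunc n b).eval₂ C ((1 + PowerSeries.X) ^ m - 1)) := by
    have hcoeff : ∀ i ≤ j, (trunc n a * trunc n b - trunc n (a * b)).coeff i = 0 := by
      intro i hij
      have hi : i < n := by omega
      rw [Polynomial.coeff_sub, Polynomial.coeff_mul, coeff_trunc, if_pos hi,
        PowerSeries.coeff_mul]
      rw [sub_eq_zero]
      refine Finset.sum_congr rfl fun x hx => ?_
      have hx' := Finset.HasAntidiagonal.mem_antidiagonal.1 hx
      have h1 : x.1 < n := by omega
      have h2 : x.2 < n := by omega
      rw [coeff_trunc, if_pos h1, coeff_trunc, if_pos h2]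
    have := coeff_eval₂_eq_zero m hcoeff
    rw [Polynomial.eval₂_sub, map_sub, sub_eq_zero] at this
    exact this.symm
  rw [key, Polynomial.eval₂_mul, PowerSeries.coeff_mul, PowerSeries.coeff_mul]
  refine Finset.sum_congr rfl fun x hx => ?_
  have hx' := Finset.HasAntidiagonal.mem_antidiagonal.1 hx
  have h1 : x.1 < n := by omega
  have h2 : x.2 < n := by omega
  rw [← coeff_substPow_eval₂ m a h1, ← coeff_substPow_eval₂ m b h2]

lemma substPow_C (c : O) : substPow m (C c) = C c := by
  ext j
  rw [coeff_substPow m _ (Nat.lt_succ_self j)]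
  rcases Nat.eq_zero_or_pos j with rfl | hj
  · simp
  · rw [PowerSeries.coeff_C, if_neg (by omega)]
    refine Finset.sum_eq_zero fun i hi => ?_
    rcases Nat.eq_zero_or_pos i with rfl | hi0
    · rw [pow_zero, PowerSeries.coeff_one, if_neg (by omega), mul_zero]
    · rw [PowerSeries.coeff_C, if_neg (by omega), zero_mul]

lemma substPow_coe (f : Polynomial O) :
    substPow m (f : PowerSeries O) = ((f.comp (QPow m) : Polynomial O) : PowerSeries O) := by
  ext j
  set n := max (j + 1) (f.natDegree + 1) with hn
  have hj : j < n := lt_of_lt_of_le (Nat.lt_succ_self j) (le_max_left _ _)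
  have hf : f.natDegree < n := lt_of_lt_of_le (Nat.lt_succ_self _) (le_max_right _ _)
  rw [coeff_substPow m _ hj]
  have hcomp : ((f.comp (QPow m) : Polynomial O) : PowerSeries O)
      = f.eval₂ C ((1 + PowerSeries.X) ^ m - 1) := by
    have : ((f.comp (QPow m) : Polynomial O) : PowerSeries O)
        = Polynomial.coeToPowerSeries.ringHom (f.eval₂ Polynomial.C (QPow m)) := rfl
    rw [this, Polynomial.hom_eval₂]
    rw [show Polynomial.coeToPowerSeries.ringHom (QPow m : Polynomial O)
        = (1 + PowerSeries.X) ^ m - 1 from QPow_coe m]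
    congr 1
    ext a
    simp
  rw [hcomp, Polynomial.eval₂_eq_sum_range' C hf _, map_sum]
  refine Finset.sum_congr rfl fun i hi => ?_
  rw [coeff_C_mul, Polynomial.coeff_coe]

lemma substPow_one : substPow m (1 : PowerSeries O) = 1 := by
  have := substPow_C m (1 : O)
  simpa using this

end Aux

/-- for `O` the ring of integers of a finite extension of `ℚ_p` and
`g ∈ O⟦T⟧` nonzero of Weierstrass degree `d`, the series
`g_m(T) = g((1+T)^m − 1)` (for `m = p^k` a `p`-power, corresponding to precomposition
with the norm map of index `m` on `ℤ_p`) has Weierstrass degree `m·d`. -/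
theorem substPow_weierstrass_degree
    (p : ℕ) [Fact p.Prime]
    (O : Type*) [CommRing O] [IsDomain O] [IsDiscreteValuationRing O]
    [IsAdicComplete (IsLocalRing.maximalIdeal O) O]
    (hp : (p : O) ∈ IsLocalRing.maximalIdeal O)
    (g : PowerSeries O) (hg : g ≠ 0) (d : ℕ)
    (hd : g.HasWeierstrassDegree d)
    (m : ℕ) (hm : 1 ≤ m) (k : ℕ) (hmp : m = p ^ k) :
    (PowerSeries.substPow m g).HasWeierstrassDegree (m * d) := by
  obtain ⟨u, f, ϖ, μ, hu, hϖ, ⟨hfmonic, hflow⟩, hfdeg, hfeq⟩ := hd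
  -- basic facts about Q = (1+X)^m - 1
  have h1eq : (1 + Polynomial.X : Polynomial O) = Polynomial.X + Polynomial.C 1 := by rw [Polynomial.C_1, add_comm]
  have h1m : (1 + Polynomial.X : Polynomial O).Monic := by
    rw [h1eq]; exact Polynomial.monic_X_add_C 1
  have h1d : (1 + Polynomial.X : Polynomial O).natDegree = 1 := by
    rw [h1eq]; exact Polynomial.natDegree_X_add_C 1
  have hpowm : ((1 + Polynomial.X : Polynomial O) ^ m).Monic := h1m.pow m
  have hpowd : ((1 + Polynomial.X : Polynomial O) ^ m).natDegree = m := by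
    rw [Polynomial.natDegree_pow, h1d, mul_one]
  have hQmonic : (QPow m : Polynomial O).Monic := by
    refine hpowm.sub_of_left ?_
    rw [Polynomial.degree_one, Polynomial.degree_eq_natDegree hpowm.ne_zero, hpowd]
    exact_mod_cast hm
  have hQdeg : (QPow m : Polynomial O).natDegree = m := by
    have hQC : (QPow m : Polynomial O)
        = (1 + Polynomial.X) ^ m - Polynomial.C 1 := by rw [Polynomial.C_1]; rfl
    rw [hQC, Polynomial.natDegree_sub_C, hpowd]
  set P : Polynomial O := f.comp (QPow m) with hP
  have hPmonic : P.Monic := hfmonic.comp hQmonic (by rw [hQdeg]; omega)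
  have hPdeg : P.natDegree = m * d := by
    rw [hP, Polynomial.natDegree_comp, hfdeg, hQdeg, mul_comm]
  -- residue field characteristic p
  set κ := IsLocalRing.ResidueField O
  set π := IsLocalRing.residue O
  have hπp : (p : κ) = 0 := by
    have : π (p : O) = 0 := (IsLocalRing.residue_eq_zero_iff _).2 hp
    simpa using this
  haveI : CharP κ p := by
    have hdvd : ringChar κ ∣ p := (ringChar.spec κ p).1 hπp
    have hP := (Fact.out : p.Prime)
    rcases (Nat.Prime.eq_one_or_self_of_dvd hP _ hdvd) with h1 | hself
    · exact absurd h1 (CharP.ringChar_ne_one)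
    · exact ringChar.of_eq hself
  -- map of Q to residue field is X^m
  have hQmap : (QPow m : Polynomial O).map π = Polynomial.X ^ m := by
    rw [QPow, hmp]
    simp only [Polynomial.map_sub, Polynomial.map_pow, Polynomial.map_add,
      Polynomial.map_one, Polynomial.map_X]
    rw [add_pow_char_pow]
    simp
  have hfmap : f.map π = Polynomial.X ^ d := by
    ext i
    rw [Polynomial.coeff_map, Polynomial.coeff_X_pow]
    rcases lt_trichotomy i d with h | rfl | h
    · rw [if_neg h.ne, IsLocalRing.residue_eq_zero_iff]
      exact hflow i (hfdeg ▸ h)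
    · rw [if_pos rfl, ← hfdeg, Polynomial.Monic.coeff_natDegree hfmonic, map_one]
    · rw [if_neg h.ne', Polynomial.coeff_eq_zero_of_natDegree_lt (hfdeg ▸ h), map_zero]
  have hPmap : P.map π = Polynomial.X ^ (m * d) := by
    rw [hP, Polynomial.map_comp, hfmap, hQmap, Polynomial.X_pow_comp, ← pow_mul, mul_comm]
  have hPlow : ∀ i < P.natDegree, P.coeff i ∈ IsLocalRing.maximalIdeal O := by
    intro i hi
    rw [hPdeg] at hi
    have : (P.map π).coeff i = 0 := by
      rw [hPmap, Polynomial.coeff_X_pow, if_neg (by omega : ¬ i = m * d)]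
    rw [Polynomial.coeff_map] at this
    exact (IsLocalRing.residue_eq_zero_iff _).1 this
  -- unit part
  obtain ⟨U, hU⟩ := hu
  have hunit : IsUnit (substPow m u) := by
    refine IsUnit.of_mul_eq_one (substPow m (↑U⁻¹ : PowerSeries O)) ?_
    rw [← substPow_mul, ← hU, Units.mul_inv, substPow_one]
  refine ⟨substPow m u, P, ϖ, μ, hunit, hϖ, ⟨hPmonic, hPlow⟩, hPdeg, ?_⟩
  rw [hfeq, substPow_mul, substPow_mul, substPow_coe, ← map_pow C, substPow_C, map_pow]
end
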